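/- In the alternation product graph G_alt², any two distinct critical paths intersect in at most a single vertex or a single edge; equivalently, two distinct critical paths cannot share two vertices lying in layers i and j with |i − j| ≥ 2. -/

import Mathlib

/-- `V₂⁺(r)`: lattice points of `ℤ²` with nonnegative coordinates that are vertices
(extreme points) of the convex hull of the lattice points in the disk of radius `r`. -/
def V2plus (r : ℕ) : Set (ℤ × ℤ) :=
  {p : ℤ × ℤ | 0 ≤ p.1 ∧ 0 ≤ p.2 ∧
    ((p.1 : ℝ), (p.2 : ℝ)) ∈ Set.extremePoints ℝ (convexHull ℝ
      {x : ℝ × ℝ | ∃ q : ℤ × ℤ, (q.1 : ℝ) ^ 2 + (q.2 : ℝ) ^ 2 ≤ (r : ℝ) ^ 2 ∧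
        x = ((q.1 : ℝ), (q.2 : ℝ))})}

lemma V2plus_mem_disk {r : ℕ} {g : ℤ × ℤ} (hg : g ∈ V2plus r) :
    g.1 ^ 2 + g.2 ^ 2 ≤ (r : ℤ) ^ 2 := by
  obtain ⟨h1, h2, h3⟩ := hg
  have hS := extremePoints_convexHull_subset h3
  obtain ⟨q, hq, heq⟩ := hS
  have e1 : (g.1 : ℝ) = q.1 := congrArg Prod.fst heq
  have e2 : (g.2 : ℝ) = q.2 := congrArg Prod.snd heq
  have : (g.1 : ℝ) ^ 2 + (g.2 : ℝ) ^ 2 ≤ (r : ℝ) ^ 2 := by rw [e1, e2]; exact hq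
  exact_mod_cast this

lemma V2plus_bounds {r : ℕ} {g : ℤ × ℤ} (hg : g ∈ V2plus r) :
    0 ≤ g.1 ∧ g.1 ≤ r ∧ 0 ≤ g.2 ∧ g.2 ≤ r := by
  have hd := V2plus_mem_disk hg
  obtain ⟨h1, h2, -⟩ := hg
  refine ⟨h1, ?_, h2, ?_⟩ <;> nlinarith

lemma V2plus_aux_fst {r : ℕ} {g h : ℤ × ℤ} (hg : g ∈ V2plus r) (hh : h ∈ V2plus r)
    (e : g.1 = h.1) (hlt : g.2 < h.2) : False := by
  obtain ⟨hg1, hg2, hgE⟩ := hg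
  have hdisk := V2plus_mem_disk hh
  obtain ⟨hh1, hh2, -⟩ := hh
  have hpos : (0 : ℤ) < h.2 := lt_of_le_of_lt hg2 hlt
  set S : Set (ℝ × ℝ) := {x : ℝ × ℝ | ∃ q : ℤ × ℤ,
      (q.1 : ℝ) ^ 2 + (q.2 : ℝ) ^ 2 ≤ (r : ℝ) ^ 2 ∧ x = ((q.1 : ℝ), (q.2 : ℝ))} with hSdef
  have hp1 : ((h.1 : ℝ), (h.2 : ℝ)) ∈ convexHull ℝ S := by
    apply subset_convexHull
    exact ⟨h, by exact_mod_cast hdisk, rfl⟩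
  have hp2 : ((h.1 : ℝ), -(h.2 : ℝ)) ∈ convexHull ℝ S := by
    apply subset_convexHull
    refine ⟨(h.1, -h.2), by push_cast; nlinarith [ (by exact_mod_cast hdisk : (h.1:ℝ)^2 + (h.2:ℝ)^2 ≤ (r:ℝ)^2)], by push_cast; rfl⟩
  have hh2R : (0 : ℝ) < (h.2 : ℝ) := by exact_mod_cast hpos
  have hseg : ((g.1 : ℝ), (g.2 : ℝ)) ∈
      openSegment ℝ ((h.1 : ℝ), (h.2 : ℝ)) ((h.1 : ℝ), -(h.2 : ℝ)) := by
    refine ⟨((h.2 : ℝ) + g.2) / (2 * h.2), ((h.2 : ℝ) - g.2) / (2 * h.2), ?_, ?_, ?_, ?_⟩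
    · apply div_pos
      · have : (0:ℝ) ≤ (g.2:ℝ) := by exact_mod_cast hg2
        linarith
      · linarith
    · apply div_pos
      · have : (g.2:ℝ) < (h.2:ℝ) := by exact_mod_cast hlt
        linarith
      · linarith
    · field_simp; try ring
    · have e' : (g.1 : ℝ) = (h.1 : ℝ) := by exact_mod_cast e
      rw [Prod.ext_iff]
      constructor
      · simp [Prod.smul_mk, e']
        field_simp
        ring
      · simp [Prod.smul_mk]
        field_simp
        ring
  have := hgE.2 hp1 hp2 hseg
  have : (h.2 : ℝ) = (g.2 : ℝ) := congrArg Prod.snd this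
  have : h.2 = g.2 := by exact_mod_cast this
  omega

lemma V2plus_aux_snd {r : ℕ} {g h : ℤ × ℤ} (hg : g ∈ V2plus r) (hh : h ∈ V2plus r)
    (e : g.2 = h.2) (hlt : g.1 < h.1) : False := by
  obtain ⟨hg1, hg2, hgE⟩ := hg
  have hdisk := V2plus_mem_disk hh
  obtain ⟨hh1, hh2, -⟩ := hh
  have hpos : (0 : ℤ) < h.1 := lt_of_le_of_lt hg1 hlt
  set S : Set (ℝ × ℝ) := {x : ℝ × ℝ | ∃ q : ℤ × ℤ,
      (q.1 : ℝ) ^ 2 + (q.2 : ℝ) ^ 2 ≤ (r : ℝ) ^ 2 ∧ x = ((q.1 : ℝ), (q.2 : ℝ))} with hSdef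
  have hp1 : ((h.1 : ℝ), (h.2 : ℝ)) ∈ convexHull ℝ S := by
    apply subset_convexHull
    exact ⟨h, by exact_mod_cast hdisk, rfl⟩
  have hp2 : (-(h.1 : ℝ), (h.2 : ℝ)) ∈ convexHull ℝ S := by
    apply subset_convexHull
    refine ⟨(-h.1, h.2), by push_cast; nlinarith [ (by exact_mod_cast hdisk : (h.1:ℝ)^2 + (h.2:ℝ)^2 ≤ (r:ℝ)^2)], by push_cast; rfl⟩
  have hh1R : (0 : ℝ) < (h.1 : ℝ) := by exact_mod_cast hpos
  have hseg : ((g.1 : ℝ), (g.2 : ℝ)) ∈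
      openSegment ℝ ((h.1 : ℝ), (h.2 : ℝ)) (-(h.1 : ℝ), (h.2 : ℝ)) := by
    refine ⟨((h.1 : ℝ) + g.1) / (2 * h.1), ((h.1 : ℝ) - g.1) / (2 * h.1), ?_, ?_, ?_, ?_⟩
    · apply div_pos
      · have : (0:ℝ) ≤ (g.1:ℝ) := by exact_mod_cast hg1
        linarith
      · linarith
    · apply div_pos
      · have : (g.1:ℝ) < (h.1:ℝ) := by exact_mod_cast hlt
        linarith
      · linarith
    · field_simp; try ring
    · have e' : (g.2 : ℝ) = (h.2 : ℝ) := by exact_mod_cast e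
      rw [Prod.ext_iff]
      constructor
      · simp [Prod.smul_mk]
        field_simp
        ring
      · simp [Prod.smul_mk, e']
        field_simp
        ring
  have := hgE.2 hp1 hp2 hseg
  have : (h.1 : ℝ) = (g.1 : ℝ) := congrArg Prod.fst this
  have : h.1 = g.1 := by exact_mod_cast this
  omega

lemma V2plus_eq_of_fst {r : ℕ} {g h : ℤ × ℤ} (hg : g ∈ V2plus r) (hh : h ∈ V2plus r)
    (e : g.1 = h.1) : g = h := by
  rcases lt_trichotomy g.2 h.2 with hlt | heq | hlt
  · exact absurd (V2plus_aux_fst hg hh e hlt) (by simp)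
  · exact Prod.ext e heq
  · exact absurd (V2plus_aux_fst hh hg e.symm hlt) (by simp)

lemma V2plus_eq_of_snd {r : ℕ} {g h : ℤ × ℤ} (hg : g ∈ V2plus r) (hh : h ∈ V2plus r)
    (e : g.2 = h.2) : g = h := by
  rcases lt_trichotomy g.1 h.1 with hlt | heq | hlt
  · exact absurd (V2plus_aux_snd hg hh e hlt) (by simp)
  · exact Prod.ext heq e
  · exact absurd (V2plus_aux_snd hh hg e.symm hlt) (by simp)

lemma zmod_int_cast_inj {M : ℕ} {a b : ℤ} (ha : 0 ≤ a) (ha' : a < M) (hb : 0 ≤ b) (hb' : b < M)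
    (e : (a : ZMod M) = b) : a = b := by
  have h0 : ((a - b : ℤ) : ZMod M) = 0 := by push_cast; rw [e]; ring
  rw [ZMod.intCast_zmod_eq_zero_iff_dvd] at h0
  obtain ⟨k, hk⟩ := h0
  have : k = 0 := by nlinarith [hk]
  simp [this] at hk; omega

/-- The layer-`i` vertex of the critical path of `G_alt²` determined by start vertex
`x ∈ (ℤ/(3Dr)ℤ)³` and step vectors `g, g' ∈ V₂⁺(r)`: after `i` layers, `⌈i/2⌉` even
steps have added `g` to coordinates `(1,2)` and `⌊i/2⌋` odd steps have added `g'` to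
coordinates `(2,3)`. -/
def cv2 (M : ℕ) (x : Fin 3 → ZMod M) (g g' : ℤ × ℤ) (i : ℕ) : Fin 3 → ZMod M :=
  ![x 0 + (((((i + 1) / 2 : ℕ) : ℤ) * g.1 : ℤ) : ZMod M),
    x 1 + (((((i + 1) / 2 : ℕ) : ℤ) * g.2 + (((i / 2 : ℕ) : ℤ)) * g'.1 : ℤ) : ZMod M),
    x 2 + ((((i / 2 : ℕ) : ℤ) * g'.2 : ℤ) : ZMod M)]

set_option maxHeartbeats 1000000 in
/-- In `G_alt²`, two distinct critical paths cannot share two vertices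
lying in layers `i` and `j` with `|i − j| ≥ 2`: if two critical paths agree in layers
`i` and `j ≥ i + 2`, then they are the same critical path. -/
theorem stmt7 (D r : ℕ) (hD : 0 < D) (hr : 0 < r)
    (x x' : Fin 3 → ZMod (3 * D * r)) (g g' h h' : ℤ × ℤ)
    (hg : g ∈ V2plus r) (hg' : g' ∈ V2plus r) (hh : h ∈ V2plus r) (hh' : h' ∈ V2plus r)
    (i j : ℕ) (hij : i + 2 ≤ j) (hj : j ≤ 2 * D)
    (hshare1 : cv2 (3 * D * r) x g g' i = cv2 (3 * D * r) x' h h' i)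
    (hshare2 : cv2 (3 * D * r) x g g' j = cv2 (3 * D * r) x' h h' j) :
    x = x' ∧ g = h ∧ g' = h' := by
  have e10 := congrFun hshare1 0
  have e11 := congrFun hshare1 1
  have e12 := congrFun hshare1 2
  have e20 := congrFun hshare2 0
  have e22 := congrFun hshare2 2
  simp only [cv2, Matrix.cons_val_zero, Matrix.cons_val_one, Matrix.head_cons,
    Matrix.cons_val_two, Matrix.tail_cons] at e10 e11 e12 e20 e22
  obtain ⟨hg1, hg2, hg3, hg4⟩ := V2plus_bounds hg
  obtain ⟨hg1', hg2', hg3', hg4'⟩ := V2plus_bounds hg'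
  obtain ⟨hh1, hh2, hh3, hh4⟩ := V2plus_bounds hh
  obtain ⟨hh1', hh2', hh3', hh4'⟩ := V2plus_bounds hh'
  set a : ℤ := (((i + 1) / 2 : ℕ) : ℤ) with ha
  set b : ℤ := (((j + 1) / 2 : ℕ) : ℤ) with hb
  set c : ℤ := ((i / 2 : ℕ) : ℤ) with hc
  set d : ℤ := ((j / 2 : ℕ) : ℤ) with hd'
  have hMcast : ((3 * D * r : ℕ) : ℤ) = 3 * (D : ℤ) * r := by push_cast; ring
  have hab : 1 ≤ b - a ∧ b - a ≤ D := by
    rw [ha, hb]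
    constructor <;> [skip; skip] <;> (push_cast; omega)
  have hcd : 1 ≤ d - c ∧ d - c ≤ D := by
    rw [hc, hd']
    constructor <;> (push_cast; omega)
  have hDr : (1 : ℤ) ≤ (D : ℤ) * r := by
    have : (1:ℤ) ≤ D := by exact_mod_cast hD
    have : (1:ℤ) ≤ r := by exact_mod_cast hr
    nlinarith
  -- coordinate 0 gives g.1 = h.1
  have hbound : ∀ k t : ℤ, 1 ≤ k → k ≤ D → 0 ≤ t → t ≤ r →
      0 ≤ k * t ∧ k * t < ((3 * D * r : ℕ) : ℤ) := by
    intro k t hk1 hk2 ht htr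
    have hDnn : (0:ℤ) ≤ (D:ℤ) := Int.ofNat_nonneg D
    have h1 : k * t ≤ (D:ℤ) * r := mul_le_mul hk2 htr ht hDnn
    refine ⟨mul_nonneg (by linarith) ht, ?_⟩
    rw [hMcast]
    nlinarith [hDr]
  have key0 : (((b - a) * g.1 : ℤ) : ZMod (3 * D * r)) = (((b - a) * h.1 : ℤ) : ZMod (3 * D * r)) := by
    push_cast
    push_cast at e10 e20
    linear_combination e20 - e10
  have k0 : (b - a) * g.1 = (b - a) * h.1 := by
    obtain ⟨p1, p2⟩ := hbound (b - a) g.1 hab.1 hab.2 hg1 hg2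
    obtain ⟨q1, q2⟩ := hbound (b - a) h.1 hab.1 hab.2 hh1 hh2
    exact zmod_int_cast_inj p1 p2 q1 q2 key0
  have hfst : g.1 = h.1 := by
    have hne : b - a ≠ 0 := by omega
    exact mul_left_cancel₀ hne k0
  have hgh : g = h := V2plus_eq_of_fst hg hh hfst
  -- coordinate 2 gives g'.2 = h'.2
  have key2 : (((d - c) * g'.2 : ℤ) : ZMod (3 * D * r)) = (((d - c) * h'.2 : ℤ) : ZMod (3 * D * r)) := by
    push_cast
    push_cast at e12 e22
    linear_combination e22 - e12
  have k2 : (d - c) * g'.2 = (d - c) * h'.2 := by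
    obtain ⟨p1, p2⟩ := hbound (d - c) g'.2 hcd.1 hcd.2 hg3' hg4'
    obtain ⟨q1, q2⟩ := hbound (d - c) h'.2 hcd.1 hcd.2 hh3' hh4'
    exact zmod_int_cast_inj p1 p2 q1 q2 key2
  have hsnd : g'.2 = h'.2 := by
    have hne : d - c ≠ 0 := by omega
    exact mul_left_cancel₀ hne k2
  have hgh' : g' = h' := V2plus_eq_of_snd hg' hh' hsnd
  subst hgh hgh'
  refine ⟨?_, rfl, rfl⟩
  funext n
  fin_cases n
  · exact add_right_cancel e10
  · exact add_right_cancel e11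
  · exact add_right_cancel e12
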